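/- arXiv:2006.16946 — 3 statements merged into one kernel-verified Lean document; each statement's English description precedes it below -/
import Mathlib

section
/- Let f : ℂ → ℂ be continuous and let UO(f) denote the set of points with unbounded forward orbit. If X ⊆ UO(f) is σ-compact, then there exists a sequence (a_n) of positive reals with a_n → ∞ such that every z ∈ UO(f) satisfying |f^[n](z)| ≤ a_n for all n ≥ 0 lies outside X. -/
open Filter Set

lemma compact_escape (f : ℂ → ℂ) (hf : Continuous f) (K : Set ℂ) (hK : IsCompact K)
    (hKU : ∀ z ∈ K, ¬ Bornology.IsBounded (Set.range fun n : ℕ => f^[n] z))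
    (M : ℝ) : ∃ N : ℕ, ∀ z ∈ K, ∃ n ≤ N, M < ‖f^[n] z‖ := by
  have hopen : ∀ m : ℕ, IsOpen {z : ℂ | M < ‖f^[m] z‖} :=
    fun m => isOpen_lt continuous_const (continuous_norm.comp (hf.iterate m))
  have hcover : K ⊆ ⋃ m : ℕ, {z : ℂ | M < ‖f^[m] z‖} := by
    intro z hz
    by_contra h
    simp only [Set.mem_iUnion, Set.mem_setOf_eq, not_exists, not_lt] at h
    refine hKU z hz ?_
    rw [isBounded_iff_forall_norm_le]
    exact ⟨M, by rintro x ⟨n, rfl⟩; simpa using h n⟩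
  obtain ⟨t, ht⟩ := hK.elim_finite_subcover _ hopen hcover
  refine ⟨t.sup id, fun z hz => ?_⟩
  obtain ⟨m, hm, hz'⟩ := Set.mem_iUnion₂.1 (ht hz)
  exact ⟨m, Finset.le_sup (f := id) hm, hz'⟩

theorem sigmaCompact_avoided_by_slow_orbits (f : ℂ → ℂ) (hf : Continuous f)
    (UO : Set ℂ)
    (hUO : UO = {z : ℂ | ¬ Bornology.IsBounded (Set.range fun n : ℕ => f^[n] z)})
    (X : Set ℂ) (hXUO : X ⊆ UO) (hX : IsSigmaCompact X) :
    ∃ a : ℕ → ℝ, (∀ n, 0 < a n) ∧ Filter.Tendsto a Filter.atTop Filter.atTop ∧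
      ∀ z ∈ UO, (∀ n : ℕ, ‖f^[n] z‖ ≤ a n) → z ∉ X := by
  obtain ⟨K, hKc, hKU⟩ := hX
  -- for each j, pick N' j such that every point of K j escapes past j+2 by time N' j
  have hesc : ∀ j : ℕ, ∃ N : ℕ, ∀ z ∈ K j, ∃ n ≤ N,
      ((j : ℝ) + 2) < ‖f^[n] z‖ := by
    intro j
    apply compact_escape f hf (K j) (hKc j)
    intro z hz
    have hzX : z ∈ X := hKU ▸ Set.mem_iUnion.2 ⟨j, hz⟩
    have := hXUO hzX
    rw [hUO] at this
    exact this
  choose N' hN' using hesc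
  set N : ℕ → ℕ := fun j => j + (Finset.range (j+1)).sum N' with hNdef
  have hNmono : StrictMono N := by
    intro i j hij
    have : (Finset.range (i+1)).sum N' ≤ (Finset.range (j+1)).sum N' :=
      Finset.sum_le_sum_of_subset (Finset.range_subset_range.2 (by omega))
    simp only [hNdef]; omega
  have hNge : ∀ j, N' j ≤ N j := by
    intro j
    have : N' j ≤ (Finset.range (j+1)).sum N' :=
      Finset.single_le_sum (f := N') (fun _ _ => Nat.zero_le _) (Finset.self_mem_range_succ j)
    simp only [hNdef]; omega
  set a : ℕ → ℝ := fun n =>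
    1 + ((Finset.range (n+1)).filter (fun i => N i ≤ n)).card with hadef
  have hapos : ∀ n, 0 < a n := by
    intro n; simp only [hadef]; positivity
  have haub : ∀ j n : ℕ, n ≤ N j → a n ≤ (j : ℝ) + 2 := by
    intro j n hn
    have hsub : (Finset.range (n+1)).filter (fun i => N i ≤ n) ⊆ Finset.range (j+1) := by
      intro i hi
      simp only [Finset.mem_filter, Finset.mem_range] at hi ⊢
      by_contra h
      have : j < i := by omega
      have := hNmono this
      omega
    have hcard : ((Finset.range (n+1)).filter (fun i => N i ≤ n)).card ≤ j + 1 := by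
      simpa using Finset.card_le_card hsub
    simp only [hadef]
    have : (((Finset.range (n+1)).filter (fun i => N i ≤ n)).card : ℝ) ≤ (j : ℝ) + 1 := by
      exact_mod_cast hcard
    linarith
  have hatop : Tendsto a atTop atTop := by
    rw [tendsto_atTop]
    intro b
    obtain ⟨B, hB⟩ := exists_nat_ge b
    filter_upwards [eventually_ge_atTop (N B)] with n hn
    have hsub : Finset.range (B+1) ⊆ (Finset.range (n+1)).filter (fun i => N i ≤ n) := by
      intro i hi
      simp only [Finset.mem_range] at hi
      have hiB : i ≤ B := by omega
      have h1 : N i ≤ N B := hNmono.monotone hiB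
      have h2 : i ≤ N i := hNmono.le_apply
      simp only [Finset.mem_filter, Finset.mem_range]
      constructor <;> omega
    have hcard : B + 1 ≤ ((Finset.range (n+1)).filter (fun i => N i ≤ n)).card := by
      simpa using Finset.card_le_card hsub
    have : (B : ℝ) + 1 ≤ (((Finset.range (n+1)).filter (fun i => N i ≤ n)).card : ℝ) := by
      exact_mod_cast hcard
    simp only [hadef]
    linarith
  refine ⟨a, hapos, hatop, ?_⟩
  intro z hz hbd hzX
  rw [← hKU] at hzX
  obtain ⟨j, hzj⟩ := Set.mem_iUnion.1 hzX
  obtain ⟨n, hn, hlt⟩ := hN' j z hzj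
  have h1 : a n ≤ (j : ℝ) + 2 := haub j n (hn.trans (hNge j))
  have h2 := hbd n
  linarith
end

section
/- Let f : ℂ → ℂ be continuous and suppose that for every M₀ > 0 and every sequence (a_n) with a_n ≥ M₀ for all n and a_n → ∞, there exists a point ζ with |f^[n](ζ)| ≤ a_n for all n whose orbit tends to infinity (ζ ∈ I(f)). Then the escaping set I(f) is not contained in any σ-compact subset of UO(f); in particular I(f) is not σ-compact. -/
/-- Strictly increasing majorant of `N`. -/
def slowEscapeIdx (N : ℕ → ℕ) : ℕ → ℕ
  | 0 => N 0
  | (j+1) => max (N (j+1)) (slowEscapeIdx N j + 1)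


theorem escaping_set_not_sigmaCompact (f : ℂ → ℂ) (hf : Continuous f)
    (I UO : Set ℂ)
    (hI : I = {z : ℂ | Filter.Tendsto (fun n : ℕ => ‖f^[n] z‖)
      Filter.atTop Filter.atTop})
    (hUO : UO = {z : ℂ | ¬ Bornology.IsBounded (Set.range fun n : ℕ => f^[n] z)})
    (hslow : ∀ M₀ : ℝ, 0 < M₀ → ∀ a : ℕ → ℝ, (∀ n, M₀ ≤ a n) →
      Filter.Tendsto a Filter.atTop Filter.atTop →
      ∃ ζ : ℂ, (∀ n : ℕ, ‖f^[n] ζ‖ ≤ a n) ∧ ζ ∈ I) :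
    (∀ X : Set ℂ, X ⊆ UO → IsSigmaCompact X → ¬ I ⊆ X) ∧ ¬ IsSigmaCompact I := by
  have key : ∀ X : Set ℂ, X ⊆ UO → IsSigmaCompact X → ¬ I ⊆ X := by
    intro X hXUO hX hIX
    classical
    obtain ⟨K, hKc, hKU⟩ := hX
    set U : ℕ → ℝ → Set ℂ :=
      fun n R => ⋃ k ∈ Finset.range (n+1), {z | R < ‖f^[k] z‖} with hU
    have hUopen : ∀ n R, IsOpen (U n R) := fun n R =>
      isOpen_biUnion fun k _ =>
        isOpen_lt continuous_const (continuous_norm.comp (hf.iterate k))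
    have hUmono : ∀ R : ℝ, ∀ n m : ℕ, n ≤ m → U n R ⊆ U m R := by
      intro R n m hnm
      exact Set.biUnion_subset_biUnion_left (Finset.range_subset_range.2 (by omega))
    -- each K j is covered by some U N (j+2)
    have hcov : ∀ j : ℕ, ∃ N : ℕ, K j ⊆ U N ((j : ℝ) + 2) := by
      intro j
      have hsub : K j ⊆ ⋃ n, U n ((j : ℝ) + 2) := by
        intro z hz
        have hzUO : z ∈ UO := hXUO (hKU ▸ Set.mem_iUnion.2 ⟨j, hz⟩)
        rw [hUO] at hzUO
        have hk : ∃ k, (j : ℝ) + 2 < ‖f^[k] z‖ := by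
          by_contra h
          push_neg at h
          exact hzUO (isBounded_iff_forall_norm_le.2 ⟨(j : ℝ) + 2, by
            rintro x ⟨k, rfl⟩
            simpa using h k⟩)
        obtain ⟨k, hk⟩ := hk
        exact Set.mem_iUnion.2 ⟨k,
          Set.mem_biUnion (Finset.self_mem_range_succ k) hk⟩
      obtain ⟨t, ht⟩ := (hKc j).elim_finite_subcover _ (fun n => hUopen n _) hsub
      refine ⟨t.sup id, ht.trans ?_⟩
      exact Set.iUnion₂_subset fun n hn => hUmono _ n _ (Finset.le_sup (f := id) hn)
    choose N hN using hcov
    -- strictly increasing version of N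
    set M : ℕ → ℕ := slowEscapeIdx N with hM
    have hMge : ∀ j, N j ≤ M j := by
      intro j
      cases j with
      | zero => exact le_refl _
      | succ j => exact le_max_left _ _
    have hMs : StrictMono M := by
      apply strictMono_nat_of_lt_succ
      intro j
      exact lt_of_lt_of_le (Nat.lt_succ_self _) (le_max_right _ _)
    have hMcov : ∀ j : ℕ, K j ⊆ U (M j) ((j : ℝ) + 2) :=
      fun j => (hN j).trans (hUmono _ _ _ (hMge j))
    -- the slow sequence
    set a : ℕ → ℝ :=
      fun n => 1 + (((Finset.range (n+1)).filter (fun i => M i ≤ n)).card : ℝ) with ha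
    have ha1 : ∀ n, (1 : ℝ) ≤ a n := by
      intro n
      simp only [ha, le_add_iff_nonneg_right]
      positivity
    have hamono : Monotone a := by
      intro n m hnm
      have hsub : (Finset.range (n+1)).filter (fun i => M i ≤ n) ⊆
          (Finset.range (m+1)).filter (fun i => M i ≤ m) := by
        intro i hi
        simp only [Finset.mem_filter, Finset.mem_range] at *
        omega
      simp only [ha]
      have := Finset.card_le_card hsub
      gcongr
    have haMj : ∀ j, a (M j) = (j : ℝ) + 2 := by
      intro j
      have hfe : (Finset.range (M j + 1)).filter (fun i => M i ≤ M j)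
          = Finset.range (j+1) := by
        ext i
        simp only [Finset.mem_filter, Finset.mem_range]
        constructor
        · rintro ⟨_, hi⟩
          have := hMs.le_iff_le.1 hi
          omega
        · intro hi
          have h1 : M i ≤ M j := hMs.monotone (by omega)
          have h2 : j ≤ M j := hMs.le_apply
          exact ⟨by omega, h1⟩
      simp only [ha, hfe, Finset.card_range]
      push_cast
      ring
    have hatop : Filter.Tendsto a Filter.atTop Filter.atTop := by
      rw [Filter.tendsto_atTop_atTop]
      intro b
      refine ⟨M ⌈b⌉₊, fun n hn => ?_⟩
      have : b ≤ a (M ⌈b⌉₊) := by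
        rw [haMj]
        calc b ≤ (⌈b⌉₊ : ℝ) := Nat.le_ceil b
          _ ≤ (⌈b⌉₊ : ℝ) + 2 := by linarith
      exact this.trans (hamono hn)
    obtain ⟨ζ, hζa, hζI⟩ := hslow 1 one_pos a ha1 hatop
    have hζX : ζ ∈ X := hIX hζI
    rw [← hKU] at hζX
    obtain ⟨j, hj⟩ := Set.mem_iUnion.1 hζX
    have hmem := hMcov j hj
    simp only [U, Set.mem_iUnion, Set.mem_setOf_eq, Finset.mem_range] at hmem
    obtain ⟨k, hk, hgt⟩ := hmem
    have h1 : ‖f^[k] ζ‖ ≤ a k := hζa k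
    have h2 : a k ≤ a (M j) := hamono (by omega)
    rw [haMj] at h2
    linarith
  refine ⟨key, ?_⟩
  have hIUO : I ⊆ UO := by
    intro z hz
    rw [hI] at hz
    rw [hUO]
    intro hb
    obtain ⟨C, hC⟩ := isBounded_iff_forall_norm_le.1 hb
    obtain ⟨n, hn⟩ := (Filter.tendsto_atTop.1 (show Filter.Tendsto (fun n : ℕ => ‖f^[n] z‖) Filter.atTop Filter.atTop from hz) (C + 1)).exists
    have := hC (f^[n] z) ⟨n, rfl⟩
    linarith
  exact fun h => key I hIUO h Set.Subset.rfl
end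

section
/- Let f : ℂ → ℂ be continuous and suppose that for every R₀ ≥ 0 there is M₀ > R₀ such that for every sequence (a_m) with a_m ≥ M₀ and a_m → ∞ there exist ζ with |f^[m](ζ)| ≤ a_m for all m and |f^[m](ζ)| → ∞, and ω with |f^[m](ω)| ≤ a_m for all m whose orbit is unbounded but not escaping. Then every σ-compact subset X of UO(f) omits some point of I(f) and some point of BU(f); in particular, none of I(f), BU(f), UO(f) is σ-compact. -/
open Filter Set

private lemma key_compact (f : ℂ → ℂ) (hf : Continuous f) (K : Set ℂ) (hK : IsCompact K)
    (hKU : ∀ z ∈ K, ¬ BddAbove (Set.range fun m : ℕ => ‖f^[m] z‖))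
    (R : ℝ) : ∃ M : ℕ, ∀ z ∈ K, ∃ j ≤ M, R < ‖f^[j] z‖ := by
  have hopen : ∀ m : ℕ, IsOpen {z : ℂ | R < ‖f^[m] z‖} :=
    fun m => isOpen_lt continuous_const (continuous_norm.comp (hf.iterate m))
  have hcover : K ⊆ ⋃ m : ℕ, {z : ℂ | R < ‖f^[m] z‖} := by
    intro z hz
    obtain ⟨y, ⟨m, rfl⟩, hy⟩ := not_bddAbove_iff.1 (hKU z hz) R
    exact Set.mem_iUnion.2 ⟨m, hy⟩
  obtain ⟨t, ht⟩ := hK.elim_finite_subcover _ hopen hcover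
  refine ⟨t.sup id, fun z hz => ?_⟩
  obtain ⟨m, hmt, hm⟩ := Set.mem_iUnion₂.1 (ht hz)
  exact ⟨m, Finset.le_sup (f := id) hmt, hm⟩

theorem main_theorem (f : ℂ → ℂ) (hf : Continuous f)
    (I UO BU : Set ℂ)
    (hI : I = {z : ℂ | Filter.Tendsto (fun m : ℕ => ‖f^[m] z‖)
      Filter.atTop Filter.atTop})
    (hUO : UO = {z : ℂ | ¬ BddAbove (Set.range fun m : ℕ => ‖f^[m] z‖)})
    (hBU : BU = UO \ I)
    (hslow : ∀ R₀ : ℝ, 0 ≤ R₀ → ∃ M₀ > R₀, ∀ a : ℕ → ℝ, (∀ m, M₀ ≤ a m) →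
      Filter.Tendsto a Filter.atTop Filter.atTop →
      (∃ ζ : ℂ, (∀ m : ℕ, ‖f^[m] ζ‖ ≤ a m) ∧ ζ ∈ I) ∧
      (∃ ω : ℂ, (∀ m : ℕ, ‖f^[m] ω‖ ≤ a m) ∧ ω ∈ UO ∧ ω ∉ I)) :
    (∀ X : Set ℂ, X ⊆ UO → IsSigmaCompact X →
      (∃ ζ ∈ I, ζ ∉ X) ∧ (∃ ω ∈ BU, ω ∉ X)) ∧
    ¬ IsSigmaCompact I ∧ ¬ IsSigmaCompact BU ∧ ¬ IsSigmaCompact UO := by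
  have main : ∀ X : Set ℂ, X ⊆ UO → IsSigmaCompact X →
      (∃ ζ ∈ I, ζ ∉ X) ∧ (∃ ω ∈ BU, ω ∉ X) := by
    intro X hXU hX
    obtain ⟨M₀, hM₀pos, hM₀⟩ := hslow 0 le_rfl
    obtain ⟨K, hKc, hKUeq⟩ := hX
    have hKsub : ∀ n, ∀ z ∈ K n,
        ¬ BddAbove (Set.range fun m : ℕ => ‖f^[m] z‖) := by
      intro n z hz
      have hzX : z ∈ X := hKUeq ▸ Set.mem_iUnion.2 ⟨n, hz⟩
      have := hXU hzX
      rwa [hUO] at this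
    choose c hc using fun n => key_compact f hf (K n) (hKc n) (hKsub n) (M₀ + n)
    set m : ℕ → ℕ := fun n => Nat.rec (c 0) (fun k ih => max (ih + 1) (c (k+1))) n with hm
    have hm0 : m 0 = c 0 := rfl
    have hmsucc : ∀ n, m (n+1) = max (m n + 1) (c (n+1)) := fun n => rfl
    have hmono : StrictMono m := strictMono_nat_of_lt_succ fun n => by
      rw [hmsucc]; exact lt_of_lt_of_le (Nat.lt_succ_self _) (le_max_left _ _)
    have hcm : ∀ n, c n ≤ m n := by
      intro n; cases n with
      | zero => exact le_of_eq hm0.symm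
      | succ k => rw [hmsucc]; exact le_max_right _ _
    set a : ℕ → ℝ :=
      fun j => M₀ + ((Finset.range j).filter (fun k => m k < j)).card with ha
    have haM : ∀ j, M₀ ≤ a j := fun j => le_add_of_nonneg_right (Nat.cast_nonneg _)
    have hub : ∀ n, ∀ j ≤ m n, a j ≤ M₀ + n := by
      intro n j hj
      have hsub : (Finset.range j).filter (fun k => m k < j) ⊆ Finset.range n := by
        intro k hk
        simp only [Finset.mem_filter, Finset.mem_range] at hk ⊢
        exact hmono.lt_iff_lt.1 (lt_of_lt_of_le hk.2 hj)
      have hcard : ((Finset.range j).filter (fun k => m k < j)).card ≤ n :=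
        le_trans (Finset.card_le_card hsub) (by simp)
      have hcard' : (((Finset.range j).filter (fun k => m k < j)).card : ℝ) ≤ (n : ℝ) := by
        exact_mod_cast hcard
      rw [ha]; simp only; linarith
    have hatop : Tendsto a atTop atTop := by
      rw [tendsto_atTop]
      intro b
      obtain ⟨n, hn⟩ := exists_nat_ge b
      filter_upwards [eventually_ge_atTop (m n + 1)] with j hj
      have hsub : Finset.range (n+1) ⊆ (Finset.range j).filter (fun k => m k < j) := by
        intro k hk
        simp only [Finset.mem_range] at hk
        have hk' : k ≤ n := Nat.lt_succ_iff.1 hk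
        have h2 : m k < j := by
          have := hmono.monotone hk'
          omega
        have h3 : k < j := by
          have := hmono.le_apply (x := k)
          omega
        exact Finset.mem_filter.2 ⟨Finset.mem_range.2 h3, h2⟩
      have hcard : (n+1 : ℝ) ≤ ((Finset.range j).filter (fun k => m k < j)).card := by
        have := Finset.card_le_card hsub
        rw [Finset.card_range] at this
        exact_mod_cast this
      rw [ha]; simp only; linarith
    obtain ⟨⟨ζ, hζa, hζI⟩, ⟨ω, hωa, hωUO, hωI⟩⟩ := hM₀ a haM hatop
    have hnot : ∀ z : ℂ, (∀ j, ‖f^[j] z‖ ≤ a j) → z ∉ X := by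
      intro z hz hzX
      rw [← hKUeq] at hzX
      obtain ⟨n, hn⟩ := Set.mem_iUnion.1 hzX
      obtain ⟨j, hjc, hjgt⟩ := hc n z hn
      have h1 := hub n j (le_trans hjc (hcm n))
      have h2 := hz j
      linarith
    exact ⟨⟨ζ, hζI, hnot ζ hζa⟩, ⟨ω, by rw [hBU]; exact ⟨hωUO, hωI⟩, hnot ω hωa⟩⟩
  have hIsub : I ⊆ UO := by
    intro z hz
    rw [hI] at hz; rw [hUO]
    rintro ⟨b, hb⟩
    obtain ⟨m0, hm0⟩ := (tendsto_atTop.1 hz (b+1)).exists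
    have := hb (Set.mem_range_self m0)
    change ‖f^[m0] z‖ ≤ b at this
    linarith
  refine ⟨main, ?_, ?_, ?_⟩
  · intro h
    obtain ⟨ζ, hζ, hζ'⟩ := (main I hIsub h).1
    exact hζ' hζ
  · intro h
    obtain ⟨ω, hω, hω'⟩ := (main BU (hBU ▸ Set.diff_subset) h).2
    exact hω' hω
  · intro h
    obtain ⟨ζ, hζ, hζ'⟩ := (main UO subset_rfl h).1
    exact hζ' (hIsub hζ)
end
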